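/- Fix subsets Δ(P) ⊆ Δ(Q) ⊆ Δ with associated parabolic subsystems R_P ⊆ R_Q, half-sums ρ^P, ρ^Q of R_P⁺, R_Q⁺, and characters χ^P_w := ρ − 2ρ^P + w⁻¹ρ, χ^Q_w := ρ − 2ρ^Q + w⁻¹ρ. Let s ≥ 2 and let w_1, …, w_s ∈ W with w_k = u_k v_k where u_k ∈ W and v_k ∈ W_Q for each k. If the numerical conditions ((Σ_{k=1}^s χ^P_{w_k}) − χ^P_1)(x_i) = 0 hold for every α_i ∈ Δ\Δ(P), then ((Σ_{k=1}^s χ^Q_{u_k}) − χ^Q_1)(x_i) = 0 for every α_i ∈ Δ\Δ(Q). -/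

import Mathlib

open scoped Classical

/-- A finite reduced crystallographic root system in a real vector space `E`, together with
a fixed base of simple roots `α_1, …, α_n` (a basis of `E`), the corresponding simple
coroots (as linear functionals) and the simple reflections generating the Weyl group. -/
structure RootSystemWithBase (n : ℕ) (E : Type*) [AddCommGroup E] [Module ℝ E] where
  /-- The finite set of roots. -/
  R : Finset E
  /-- The simple roots `Δ = {α_1, …, α_n}`, a basis of `E`. -/
  base : Module.Basis (Fin n) ℝ E
  base_mem : ∀ i, base i ∈ R
  neg_mem : ∀ r ∈ R, -r ∈ R
  /-- Reducedness: the only multiples of a root that are roots are `±` itself. -/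
  reduced : ∀ r ∈ R, ∀ t : ℝ, t • r ∈ R → t = 1 ∨ t = -1
  /-- Every root is an integral combination of the simple roots, with all coefficients of
  the same sign. -/
  int_pos_or_neg : ∀ r ∈ R, ∃ c : Fin n → ℤ,
      (∀ i, base.repr r i = (c i : ℝ)) ∧ ((∀ i, 0 ≤ c i) ∨ (∀ i, c i ≤ 0))
  /-- The simple coroots `α_i^∨`, viewed as linear functionals on `E`. -/
  coroot : Fin n → Module.Dual ℝ E
  coroot_self : ∀ i, coroot i (base i) = 2
  /-- Crystallographic condition: `α_i^∨` takes integer values on roots. -/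
  crystallographic : ∀ i, ∀ r ∈ R, ∃ m : ℤ, coroot i r = (m : ℝ)
  /-- The simple reflections `s_{α_i}`. -/
  refl : Fin n → E ≃ₗ[ℝ] E
  refl_apply : ∀ i x, refl i x = x - coroot i x • base i
  refl_mem : ∀ i, ∀ r ∈ R, refl i r ∈ R

namespace RootSystemWithBase

variable {n : ℕ} {E : Type*} [AddCommGroup E] [Module ℝ E]

/-- A positive root: all coefficients on the base are nonnegative. -/
def IsPos (RS : RootSystemWithBase n E) (r : E) : Prop :=
  r ∈ RS.R ∧ ∀ i, 0 ≤ RS.base.repr r i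

/-- A negative root: all coefficients on the base are nonpositive. -/
def IsNeg (RS : RootSystemWithBase n E) (r : E) : Prop :=
  r ∈ RS.R ∧ ∀ i, RS.base.repr r i ≤ 0

/-- The Weyl group `W`, generated by all simple reflections. -/
def weyl (RS : RootSystemWithBase n E) : Subgroup (E ≃ₗ[ℝ] E) :=
  Subgroup.closure (Set.range RS.refl)

/-- The parabolic subgroup `W_Q`, generated by the simple reflections `s_α, α ∈ Δ(Q)`. -/
def weylSub (RS : RootSystemWithBase n E) (Q : Finset (Fin n)) : Subgroup (E ≃ₗ[ℝ] E) :=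
  Subgroup.closure (RS.refl '' ↑Q)

/-- The parabolic subsystem `R_Q = R ∩ span_ℤ Δ(Q)`. -/
def sub (RS : RootSystemWithBase n E) (Q : Finset (Fin n)) : Set E :=
  {r : E | r ∈ RS.R ∧ r ∈ Submodule.span ℤ (RS.base '' ↑Q)}

/-- The fundamental coweights `x_1, …, x_n`: the basis of `E^*` dual to the simple roots,
so that `α_i(x_j) = δ_{ij}`. -/
noncomputable def coweight (RS : RootSystemWithBase n E) (i : Fin n) : Module.Dual ℝ E :=
  RS.base.coord i

/-- The contragradient action of `w` on the dual space: `(w · f)(e) = f(w⁻¹ e)`. -/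
def cAct (w : E ≃ₗ[ℝ] E) (f : Module.Dual ℝ E) : Module.Dual ℝ E :=
  f ∘ₗ (w.symm : E →ₗ[ℝ] E)

/-- The set `R⁺` of positive roots. -/
noncomputable def posRoots (RS : RootSystemWithBase n E) : Finset E :=
  RS.R.filter fun r => ∀ i, 0 ≤ RS.base.repr r i

/-- `ρ`, the half sum of the positive roots. -/
noncomputable def rho (RS : RootSystemWithBase n E) : E :=
  (2⁻¹ : ℝ) • ∑ r ∈ RS.posRoots, r

/-- `ρ^Q`, the half sum of the roots in `R_Q⁺`. -/
noncomputable def rhoSub (RS : RootSystemWithBase n E) (Q : Finset (Fin n)) : E :=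
  (2⁻¹ : ℝ) • ∑ r ∈ RS.posRoots.filter
    (fun r => r ∈ Submodule.span ℤ (RS.base '' (↑Q : Set (Fin n)))), r

/-- Word length with respect to the simple reflections. -/
noncomputable def len (RS : RootSystemWithBase n E) (w : E ≃ₗ[ℝ] E) : ℕ :=
  sInf {m : ℕ | ∃ f : Fin m → Fin n, w = (List.ofFn fun j => RS.refl (f j)).prod}

/-- The character `χ^P_w = ρ − 2ρ^P + w⁻¹ρ`. -/
noncomputable def chi (RS : RootSystemWithBase n E) (P : Finset (Fin n))
    (w : E ≃ₗ[ℝ] E) : E :=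
  RS.rho - (2 : ℝ) • RS.rhoSub P + w.symm RS.rho

end RootSystemWithBase


open RootSystemWithBase in
lemma coord_eq_zero_of_span {n : ℕ} {E : Type*} [AddCommGroup E] [Module ℝ E]
    (RS : RootSystemWithBase n E) {Q : Finset (Fin n)} {i : Fin n} (hi : i ∉ Q)
    {r : E} (hr : r ∈ Submodule.span ℤ (RS.base '' (↑Q : Set (Fin n)))) :
    RS.base.coord i r = 0 := by
  induction hr using Submodule.span_induction with
  | mem x hx =>
      obtain ⟨j, hj, rfl⟩ := hx
      have hij : j ≠ i := fun h => hi (h ▸ hj)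
      simp [Module.Basis.coord_apply, Finsupp.single_apply, hij]
  | zero => simp
  | add x y _ _ hx hy => rw [map_add, hx, hy, add_zero]
  | smul m x _ hx => rw [map_zsmul]; simp [hx]

open RootSystemWithBase in
lemma coord_weylSub_apply {n : ℕ} {E : Type*} [AddCommGroup E] [Module ℝ E]
    (RS : RootSystemWithBase n E) {Q : Finset (Fin n)} {i : Fin n} (hi : i ∉ Q)
    {g : E ≃ₗ[ℝ] E} (hg : g ∈ RS.weylSub Q) :
    ∀ y : E, RS.base.coord i (g y) = RS.base.coord i y := by
  induction hg using Subgroup.closure_induction with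
  | mem x hx =>
      obtain ⟨j, hj, rfl⟩ := hx
      intro y
      have hij : j ≠ i := fun h => hi (h ▸ hj)
      rw [RS.refl_apply j y]
      simp [Module.Basis.coord_apply, Finsupp.single_apply, hij]
  | one => intro y; rfl
  | mul a b _ _ ha hb =>
      intro y
      have : (a * b) y = a (b y) := rfl
      rw [this, ha, hb]
  | inv a _ ha =>
      intro y
      have : a (a⁻¹ y) = y := by
        have : a⁻¹ = a.symm := rfl
        rw [this]; exact a.apply_symm_apply y
      conv_rhs => rw [← this, ha]

open RootSystemWithBase in
lemma coord_rhoSub_eq_zero {n : ℕ} {E : Type*} [AddCommGroup E] [Module ℝ E]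
    (RS : RootSystemWithBase n E) {Q : Finset (Fin n)} {i : Fin n} (hi : i ∉ Q) :
    RS.base.coord i (RS.rhoSub Q) = 0 := by
  rw [rhoSub, map_smul, smul_eq_mul, map_sum]
  have : ∀ r ∈ RS.posRoots.filter
      (fun r => r ∈ Submodule.span ℤ (RS.base '' (↑Q : Set (Fin n)))),
      RS.base.coord i r = 0 := by
    intro r hr
    exact coord_eq_zero_of_span RS hi (Finset.mem_filter.mp hr).2
  rw [Finset.sum_congr rfl this]
  simp

/-- For `Δ(P) ⊆ Δ(Q) ⊆ Δ`, `s ≥ 2` and `w_k = u_k v_k` with `u_k ∈ W`,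
`v_k ∈ W_Q`: if `((Σ_k χ^P_{w_k}) − χ^P_1)(x_i) = 0` for every `α_i ∈ Δ\Δ(P)`, then
`((Σ_k χ^Q_{u_k}) − χ^Q_1)(x_i) = 0` for every `α_i ∈ Δ\Δ(Q)`. -/
theorem chi_numerical_conditions_descend {n : ℕ} {E : Type*} [AddCommGroup E] [Module ℝ E]
    (RS : RootSystemWithBase n E) (P Q : Finset (Fin n)) (hPQ : P ⊆ Q)
    (s : ℕ) (hs : 2 ≤ s) (w u v : Fin s → (E ≃ₗ[ℝ] E))
    (hw : ∀ k, w k ∈ RS.weyl) (hu : ∀ k, u k ∈ RS.weyl) (hv : ∀ k, v k ∈ RS.weylSub Q)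
    (hfact : ∀ k, w k = u k * v k)
    (hnum : ∀ i ∉ P,
      (∑ k, RS.coweight i (RS.chi P (w k))) - RS.coweight i (RS.chi P 1) = 0) :
    ∀ i ∉ Q,
      (∑ k, RS.coweight i (RS.chi Q (u k))) - RS.coweight i (RS.chi Q 1) = 0 := by
  intro i hiQ
  have hiP : i ∉ P := fun h => hiQ (hPQ h)
  have hnum' := hnum i hiP
  have hP0 : RS.base.coord i (RS.rhoSub P) = 0 := coord_rhoSub_eq_zero RS hiP
  have hQ0 : RS.base.coord i (RS.rhoSub Q) = 0 := coord_rhoSub_eq_zero RS hiQ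
  have hk : ∀ k, RS.base.coord i ((w k).symm RS.rho)
      = RS.base.coord i ((u k).symm RS.rho) := by
    intro k
    rw [hfact k]
    have h1 : (u k * v k).symm RS.rho = (v k).symm ((u k).symm RS.rho) := rfl
    rw [h1]
    exact coord_weylSub_apply RS hiQ ((RS.weylSub Q).inv_mem (hv k)) _
  simp only [RootSystemWithBase.chi, RootSystemWithBase.coweight, map_add, map_sub,
    map_smul, smul_eq_mul, hP0, hQ0, hk, mul_zero, sub_zero] at hnum' ⊢
  exact hnum'
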